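/- Let E ⊆ ℝ^{n+1} satisfy the uniform ball condition with radius r > 0. Then for every 0 < ρ < r, the nearest-point projection π_{∂E} is (r/(r−ρ))-Lipschitz on the closed tubular neighborhood {z : dist(z, ∂E) ≤ ρ}. -/

import Mathlib

/-- The uniform ball condition with radius `r`. -/
def UnifBallCond {n : ℕ} (E : Set (EuclideanSpace ℝ (Fin (n+1)))) (r : ℝ) : Prop :=
  ∀ x ∈ frontier E, ∃ cIn cOut : EuclideanSpace ℝ (Fin (n+1)),
    Metric.ball cIn r ⊆ E ∧ Metric.ball cOut r ⊆ Eᶜ ∧ dist x cIn = r ∧ dist x cOut = r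

section Aux

open Metric

local notation "⟪" x ", " y "⟫" => @inner ℝ _ _ x y

variable {V : Type*} [NormedAddCommGroup V] [InnerProductSpace ℝ V]

/-- If two balls are contained in disjoint sets, the distance between centers is at least
the sum of the radii. -/
lemma balls_disjoint_dist {A B : Set V} (hAB : ∀ z, z ∈ A → z ∉ B)
    (c₁ c₂ : V) (r₁ r₂ : ℝ) (hr₁ : 0 < r₁) (hr₂ : 0 < r₂)
    (h₁ : ball c₁ r₁ ⊆ A) (h₂ : ball c₂ r₂ ⊆ B) : r₁ + r₂ ≤ dist c₁ c₂ := by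
  by_contra hlt
  push_neg at hlt
  set s := r₁ + r₂ with hs
  have hspos : 0 < s := by positivity
  set t := r₁ / s with ht
  have ht0 : 0 < t := by positivity
  have ht1 : 1 - t = r₂ / s := by rw [ht, hs]; field_simp; ring
  have ht1' : 0 < 1 - t := by rw [ht1]; positivity
  set p := c₁ + t • (c₂ - c₁) with hp
  have hd12 : ‖c₂ - c₁‖ < s := by rw [← dist_eq_norm, dist_comm]; exact hlt
  have hp1 : p ∈ ball c₁ r₁ := by
    have e : p - c₁ = t • (c₂ - c₁) := by rw [hp]; abel
    rw [mem_ball, dist_eq_norm, e, norm_smul, Real.norm_eq_abs, abs_of_pos ht0]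
    have : t * ‖c₂ - c₁‖ < t * s := by exact mul_lt_mul_of_pos_left hd12 ht0
    have e2 : t * s = r₁ := by rw [ht]; field_simp
    linarith
  have hp2 : p ∈ ball c₂ r₂ := by
    have e : p - c₂ = (1 - t) • (c₁ - c₂) := by rw [hp]; module
    rw [mem_ball, dist_eq_norm, e, norm_smul, Real.norm_eq_abs, abs_of_pos ht1']
    have hd21 : ‖c₁ - c₂‖ < s := by rw [norm_sub_rev]; exact hd12
    have : (1 - t) * ‖c₁ - c₂‖ < (1 - t) * s := mul_lt_mul_of_pos_left hd21 ht1'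
    have e2 : (1 - t) * s = r₂ := by rw [ht1]; field_simp
    linarith
  exact hAB p (h₁ hp1) (h₂ hp2)

/-- Segment/tangency lemma: if `x` is at distance `d` from `a`, `a` at distance `r`
from `cOut`, and `dist x cOut ≥ d + r` (balls disjoint), with `cIn` antipodal to `cOut`
about `a`, and `b` outside `ball cIn r`, then the key inner product inequality holds. -/
lemma aux_key (a x cIn cOut b : V) (r d : ℝ) (hr : 0 < r) (hd : 0 < d)
    (hmid : cIn - a = -(cOut - a))
    (hxa : dist x a = d) (hac : dist a cOut = r)
    (hxc : d + r ≤ dist x cOut)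
    (hb : r ≤ dist b cIn) :
    ⟪x - a, b - a⟫ ≤ d / (2*r) * ‖b - a‖^2 := by
  have hxc' : dist x cOut = d + r := by
    refine le_antisymm ?_ hxc
    calc dist x cOut ≤ dist x a + dist a cOut := dist_triangle _ _ _
      _ = d + r := by rw [hxa, hac]
  have h1 : ‖x - a‖ = d := by rw [← dist_eq_norm, hxa]
  have h2 : ‖a - cOut‖ = r := by rw [← dist_eq_norm, hac]
  have h3 : ‖x - cOut‖ = d + r := by rw [← dist_eq_norm, hxc']
  have hinner : ⟪x - a, a - cOut⟫ = d * r := by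
    have h := norm_add_sq_real (x - a) (a - cOut)
    rw [show x - a + (a - cOut) = x - cOut by abel, h1, h2, h3] at h
    nlinarith
  have hkey : r • (x - a) = d • (a - cOut) := by
    have h := (inner_eq_norm_mul_iff_real (x := x - a) (y := a - cOut))
    rw [h1, h2] at h
    exact h.mp hinner
  have hIn : a - cOut = cIn - a := by rw [hmid]; abel
  have hcIn : ‖cIn - a‖ = r := by rw [← hIn, h2]
  have hb2 : ⟪cIn - a, b - a⟫ ≤ ‖b - a‖^2 / 2 := by
    have h := norm_sub_sq_real (b - a) (cIn - a)
    rw [show b - a - (cIn - a) = b - cIn by abel, hcIn] at h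
    have hbn : r ≤ ‖b - cIn‖ := by rw [← dist_eq_norm]; exact hb
    have h2' : r^2 ≤ ‖b - cIn‖^2 := by nlinarith [norm_nonneg (b - cIn)]
    rw [real_inner_comm] at h
    nlinarith
  have hr' : r ≠ 0 := ne_of_gt hr
  have hxeq : ⟪x - a, b - a⟫ = (d / r) * ⟪cIn - a, b - a⟫ := by
    have h : ⟪r • (x - a), b - a⟫ = ⟪d • (a - cOut), b - a⟫ := by rw [hkey]
    rw [real_inner_smul_left, real_inner_smul_left, hIn] at h
    rw [div_mul_eq_mul_div, eq_div_iff hr']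
    linarith
  rw [hxeq]
  have hdr : 0 ≤ d / r := le_of_lt (div_pos hd hr)
  calc (d / r) * ⟪cIn - a, b - a⟫ ≤ (d / r) * (‖b - a‖^2 / 2) :=
        mul_le_mul_of_nonneg_left hb2 hdr
    _ = d / (2*r) * ‖b - a‖^2 := by ring

/-- Key inequality: for `x` in the tube with nearest point `a = π x`,
`⟪x - a, b - a⟫ ≤ d/(2r) ‖b - a‖²` for all `b` in the frontier. -/
lemma key_ineq {n : ℕ} (E : Set (EuclideanSpace ℝ (Fin (n+1)))) (r : ℝ)
    (hr : 0 < r) (hUBC : UnifBallCond E r)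
    (x a : EuclideanSpace ℝ (Fin (n+1)))
    (haF : a ∈ frontier E)
    (hda : dist x a = Metric.infDist x (frontier E))
    (b : EuclideanSpace ℝ (Fin (n+1))) (hb : b ∈ frontier E) :
    ⟪x - a, b - a⟫ ≤ (Metric.infDist x (frontier E)) / (2*r) * ‖b - a‖^2 := by
  set d := Metric.infDist x (frontier E) with hdd
  have hd0 : 0 ≤ d := Metric.infDist_nonneg
  rcases eq_or_lt_of_le hd0 with hd | hd
  · -- d = 0 : x = a
    have hxa : x = a := dist_eq_zero.mp (by rw [hda, ← hd])
    rw [hxa, ← hd]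
    simp
  -- d > 0 case
  obtain ⟨cIn, cOut, hIn, hOut, haIn, haOut⟩ := hUBC a haF
  have hEdisj : ∀ z : EuclideanSpace ℝ (Fin (n+1)), z ∈ E → z ∉ Eᶜ := fun z hz hz' => hz' hz
  have hcc : dist cIn cOut = 2*r := by
    refine le_antisymm ?_ ?_
    · calc dist cIn cOut ≤ dist cIn a + dist a cOut := dist_triangle _ _ _
        _ = 2*r := by rw [dist_comm cIn a, haIn, haOut]; ring
    · have := balls_disjoint_dist hEdisj cIn cOut r r hr hr hIn hOut; linarith
  -- a is the midpoint: cIn - a = -(cOut - a)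
  have hmid : cIn - a = -(cOut - a) := by
    have h1 : ‖cIn - a‖ = r := by rw [← dist_eq_norm, dist_comm, haIn]
    have h2 : ‖a - cOut‖ = r := by rw [← dist_eq_norm, haOut]
    have h3 : ‖cIn - cOut‖ = 2*r := by rw [← dist_eq_norm, hcc]
    have hinner : ⟪cIn - a, a - cOut⟫ = r * r := by
      have h := norm_add_sq_real (cIn - a) (a - cOut)
      rw [show cIn - a + (a - cOut) = cIn - cOut by abel, h1, h2, h3] at h
      nlinarith
    have hkey : r • (cIn - a) = r • (a - cOut) := by
      have h := (inner_eq_norm_mul_iff_real (x := cIn - a) (y := a - cOut))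
      rw [h1, h2] at h
      exact h.mp hinner
    have heq := smul_right_injective (EuclideanSpace ℝ (Fin (n+1))) (ne_of_gt hr) hkey
    rw [heq]; abel
  -- b is outside both tangent balls
  have hbF : b ∈ closure E ∩ closure Eᶜ := by
    rw [← frontier_eq_closure_inter_closure]; exact hb
  have hbIn : r ≤ dist b cIn := by
    by_contra h
    push_neg at h
    have hmem : b ∈ ball cIn r := mem_ball.mpr h
    have hbint : b ∈ interior E := interior_maximal hIn isOpen_ball hmem
    have hnot : b ∈ (interior E)ᶜ := by rw [← closure_compl]; exact hbF.2
    exact hnot hbint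
  have hbOut : r ≤ dist b cOut := by
    by_contra h
    push_neg at h
    have hmem : b ∈ ball cOut r := mem_ball.mpr h
    have hbint : b ∈ interior Eᶜ := interior_maximal hOut isOpen_ball hmem
    rw [interior_compl] at hbint
    exact hbint hbF.1
  -- ball x d avoids the frontier, hence lies in `interior E` or `interior Eᶜ`
  have hball : ball x d ⊆ (frontier E)ᶜ := by
    intro z hz hzF
    have hle : d ≤ dist x z := Metric.infDist_le_dist_of_mem hzF
    rw [mem_ball, dist_comm] at hz
    linarith
  have hfc : (frontier E)ᶜ = interior Eᶜ ∪ interior E := by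
    rw [frontier_eq_closure_inter_closure, Set.compl_inter, ← interior_compl, closure_compl]
    simp
  have hsub : ball x d ⊆ interior Eᶜ ∪ interior E := by rw [← hfc]; exact hball
  have hdisj2 : Disjoint (interior Eᶜ) (interior E) := by
    refine Set.disjoint_left.mpr fun z hz1 hz2 => ?_
    exact (interior_subset hz1) (interior_subset hz2)
  have hconn : IsPreconnected (ball x d) := (convex_ball x d).isPreconnected
  rcases hconn.subset_or_subset isOpen_interior isOpen_interior hdisj2 hsub with hcase | hcase
  · -- ball x d ⊆ interior Eᶜ : disjoint from ball cIn r ⊆ E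
    have hEdisj' : ∀ z : EuclideanSpace ℝ (Fin (n+1)), z ∈ Eᶜ → z ∉ E := fun z hz hz' => hz hz'
    have hxc : d + r ≤ dist x cIn :=
      balls_disjoint_dist hEdisj' x cIn d r hd hr (hcase.trans interior_subset) hIn
    have hmid' : cOut - a = -(cIn - a) := by rw [hmid]; abel
    exact aux_key a x cOut cIn b r d hr hd hmid' hda haIn hxc hbOut
  · -- ball x d ⊆ interior E : disjoint from ball cOut r ⊆ Eᶜ
    have hxc : d + r ≤ dist x cOut :=
      balls_disjoint_dist hEdisj x cOut d r hd hr (hcase.trans interior_subset) hOut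
    exact aux_key a x cIn cOut b r d hr hd hmid hda haOut hxc hbIn

end Aux

/-- If `E` satisfies the uniform ball condition with radius `r > 0`, then for every
`0 < ρ < r` the nearest-point projection `π_{∂E}` is `(r/(r−ρ))`-Lipschitz on the closed
tubular neighborhood `{z : dist(z,∂E) ≤ ρ}`. Here `π` is the (well-defined) nearest-point
projection onto `∂E`, characterized in `N_r(∂E)` by the stated hypothesis. -/
theorem projection_lipschitz {n : ℕ} (E : Set (EuclideanSpace ℝ (Fin (n+1)))) (r : ℝ)
    (hr : 0 < r) (hUBC : UnifBallCond E r)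
    (π : EuclideanSpace ℝ (Fin (n+1)) → EuclideanSpace ℝ (Fin (n+1)))
    (hπ : ∀ x, Metric.infDist x (frontier E) < r →
      π x ∈ frontier E ∧ dist x (π x) = Metric.infDist x (frontier E) ∧
      ∀ p ∈ frontier E, dist x p = Metric.infDist x (frontier E) → p = π x)
    (ρ : ℝ) (hρ : 0 < ρ) (hρr : ρ < r) :
    ∀ x y : EuclideanSpace ℝ (Fin (n+1)),
      Metric.infDist x (frontier E) ≤ ρ → Metric.infDist y (frontier E) ≤ ρ →
      dist (π x) (π y) ≤ (r / (r - ρ)) * dist x y := by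
  intro x y hx hy
  have hxr : Metric.infDist x (frontier E) < r := lt_of_le_of_lt hx hρr
  have hyr : Metric.infDist y (frontier E) < r := lt_of_le_of_lt hy hρr
  obtain ⟨haF, hda, -⟩ := hπ x hxr
  obtain ⟨hbF, hdb, -⟩ := hπ y hyr
  set a := π x with ha
  set b := π y with hb
  have key1 : @inner ℝ _ _ (x - a) (b - a) ≤ (Metric.infDist x (frontier E)) / (2*r) * ‖b - a‖^2 :=
    key_ineq E r hr hUBC x a haF hda b hbF
  have key2 : @inner ℝ _ _ (y - b) (a - b) ≤ (Metric.infDist y (frontier E)) / (2*r) * ‖a - b‖^2 :=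
    key_ineq E r hr hUBC y b hbF hdb a haF
  set D := dist a b with hD
  have hDn : ‖a - b‖ = D := (dist_eq_norm a b).symm
  have hDn' : ‖b - a‖ = D := by rw [norm_sub_rev, hDn]
  have hD0 : 0 ≤ D := dist_nonneg
  have h2r : (0:ℝ) < 2*r := by linarith
  have key1' : @inner ℝ _ _ (x - a) (b - a) ≤ ρ / (2*r) * D^2 := by
    calc @inner ℝ _ _ (x - a) (b - a)
        ≤ (Metric.infDist x (frontier E)) / (2*r) * ‖b - a‖^2 := key1
      _ ≤ ρ / (2*r) * ‖b - a‖^2 := by gcongr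
      _ = ρ / (2*r) * D^2 := by rw [hDn']
  have key2' : @inner ℝ _ _ (y - b) (a - b) ≤ ρ / (2*r) * D^2 := by
    calc @inner ℝ _ _ (y - b) (a - b)
        ≤ (Metric.infDist y (frontier E)) / (2*r) * ‖a - b‖^2 := key2
      _ ≤ ρ / (2*r) * ‖a - b‖^2 := by gcongr
      _ = ρ / (2*r) * D^2 := by rw [hDn]
  -- decompose D² = ⟪a-b, a-x⟫ + ⟪a-b, x-y⟫ + ⟪a-b, y-b⟫
  have hdecomp : D^2 = @inner ℝ _ _ (a - b) (a - x) + @inner ℝ _ _ (a - b) (x - y)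
      + @inner ℝ _ _ (a - b) (y - b) := by
    have : (a : EuclideanSpace ℝ (Fin (n+1))) - b = (a - x) + (x - y) + (y - b) := by abel
    calc D^2 = @inner ℝ _ _ (a - b) (a - b) := by
          rw [real_inner_self_eq_norm_sq, hDn]
      _ = _ := by rw [this, inner_add_right, inner_add_right]
  have e1 : @inner ℝ _ _ (a - b) (a - x) = @inner ℝ _ _ (x - a) (b - a) := by
    rw [show (a : EuclideanSpace ℝ (Fin (n+1))) - b = -(b - a) by abel,
        show (a : EuclideanSpace ℝ (Fin (n+1))) - x = -(x - a) by abel,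
        inner_neg_neg, real_inner_comm]
  have e2 : @inner ℝ _ _ (a - b) (y - b) = @inner ℝ _ _ (y - b) (a - b) := real_inner_comm _ _
  have hcs : @inner ℝ _ _ (a - b) (x - y) ≤ D * dist x y := by
    calc @inner ℝ _ _ (a - b) (x - y) ≤ ‖a - b‖ * ‖x - y‖ := real_inner_le_norm _ _
      _ = D * dist x y := by rw [hDn, dist_eq_norm]
  have hmain : D^2 ≤ ρ / r * D^2 + D * dist x y := by
    have hρr2 : ρ / (2*r) * D^2 + ρ / (2*r) * D^2 = ρ / r * D^2 := by
      field_simp; ring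
    calc D^2 = @inner ℝ _ _ (a - b) (a - x) + @inner ℝ _ _ (a - b) (x - y)
        + @inner ℝ _ _ (a - b) (y - b) := hdecomp
      _ ≤ ρ / (2*r) * D^2 + D * dist x y + ρ / (2*r) * D^2 := by
          rw [e1, e2]
          exact add_le_add (add_le_add key1' hcs) key2'
      _ = ρ / r * D^2 + D * dist x y := by linarith [hρr2]
  -- conclude
  have hrρ : (0:ℝ) < r - ρ := by linarith
  rw [div_mul_eq_mul_div, le_div_iff₀ hrρ]
  -- goal : dist (π x) (π y) * (r - ρ) ≤ r * dist x y
  have hDgoal : D * (r - ρ) ≤ r * dist x y := by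
    rcases eq_or_lt_of_le hD0 with h0 | h0
    · rw [← h0]
      have : (0:ℝ) ≤ r * dist x y := by positivity
      linarith
    · -- multiply hmain by r and cancel one D
      have hmr : r * D^2 ≤ ρ * D^2 + r * (D * dist x y) := by
        have h := mul_le_mul_of_nonneg_left hmain (le_of_lt hr)
        have hexp : r * (ρ / r * D^2 + D * dist x y) = ρ * D^2 + r * (D * dist x y) := by
          field_simp
        rw [hexp] at h
        exact h
      nlinarith [hmr, h0, mul_pos h0 hrρ]
  exact hDgoal
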